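/- For every m ≥ 1, every cycle in the graph Y_m has at least 2·2^{2^{2m+1}} + 2 vertices. -/

import Mathlib

open SimpleGraph

/-- A wiring of `G` into `H`: a map on vertices together with, for each edge
(given by an ordered adjacent pair, compatibly with reversal), a walk in `H`
joining the images of the endpoints. -/
structure Wiring {V : Type*} {W : Type*} (G : SimpleGraph V) (H : SimpleGraph W) where
  toFun : V → W
  walk : ∀ u v : V, G.Adj u v → H.Walk (toFun u) (toFun v)
  walk_symm : ∀ (u v : V) (h : G.Adj u v), walk v u (h.symm) = (walk u v h).reverse

namespace Wiring

variable {V : Type*} {W : Type*} {G : SimpleGraph V} {H : SimpleGraph W}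

/-- A wiring is a coarse `k`-wiring if the vertex map is at most `k`-to-one and
every edge of `H` lies on at most `k` of the chosen walks.  (Since walks are
indexed by *ordered* adjacent pairs, with the walk of `(v,u)` the reverse of the
walk of `(u,v)`, each edge of `G` is counted twice; hence the bound `2 * k`.) -/
def IsCoarse (Wr : Wiring G H) (k : ℕ) : Prop :=
  (∀ w : W, {v : V | Wr.toFun v = w}.ncard ≤ k) ∧
  (∀ e : Sym2 W, e ∈ H.edgeSet →
    {p : V × V | ∃ h : G.Adj p.1 p.2, e ∈ (Wr.walk p.1 p.2 h).edges}.ncard ≤ 2 * k)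

/-- The vertices of the image of a wiring. -/
def imageVerts (Wr : Wiring G H) : Set W :=
  Set.range Wr.toFun ∪ {w : W | ∃ (u v : V) (h : G.Adj u v), w ∈ (Wr.walk u v h).support}

/-- The volume of a wiring: the number of vertices of its image. -/
noncomputable def volume (Wr : Wiring G H) : ℕ := Wr.imageVerts.ncard

/-- The image of a wiring, as a subgraph of the target. -/
def imageSubgraph (Wr : Wiring G H) : H.Subgraph where
  verts := Wr.imageVerts
  Adj w w' := ∃ (u v : V) (h : G.Adj u v), (Wr.walk u v h).toSubgraph.Adj w w'
  adj_sub := by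
    rintro a b ⟨u, v, h, ha⟩
    exact (Wr.walk u v h).toSubgraph.adj_sub ha
  edge_vert := by
    rintro a b ⟨u, v, h, ha⟩
    refine Or.inr ⟨u, v, h, ?_⟩
    have := (Wr.walk u v h).toSubgraph.edge_vert ha
    rwa [SimpleGraph.Walk.verts_toSubgraph] at this
  symm := by
    refine ⟨?_⟩
    rintro a b ⟨u, v, h, ha⟩
    exact ⟨u, v, h, ha.symm⟩

end Wiring

/-- `wir k G H` : the minimal volume of a coarse `k`-wiring of `G` into `H`
(`⊤` if there is none). -/
noncomputable def wir {V : Type*} {W : Type*} (k : ℕ)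
    (G : SimpleGraph V) (H : SimpleGraph W) : ℕ∞ :=
  sInf {N : ℕ∞ | ∃ Wr : Wiring G H, Wr.IsCoarse k ∧ N = (Wr.volume : ℕ∞)}

/-- The `k`-wiring profile of `X` into `H`. -/
noncomputable def wirProfile {V : Type*} {W : Type*}
    (X : SimpleGraph V) (H : SimpleGraph W) (k n : ℕ) : ℕ∞ :=
  sSup {N : ℕ∞ | ∃ Γ : X.Subgraph, Γ.verts.Finite ∧ Γ.verts.ncard ≤ n ∧ N = wir k Γ.coe H}

/-- One-directional adjacency generating the 2-dimensional integer grid. -/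
def gridStep (p q : ℤ × ℤ) : Prop :=
  (p.1 = q.1 ∧ q.2 = p.2 + 1) ∨ (p.2 = q.2 ∧ q.1 = p.1 + 1)

/-- The 2-dimensional integer grid: vertices `ℤ²`, edges between points at distance 1. -/
def grid : SimpleGraph (ℤ × ℤ) where
  Adj p q := p ≠ q ∧ (gridStep p q ∨ gridStep q p)
  symm := ⟨fun p q h => ⟨h.1.symm, h.2.symm⟩⟩
  loopless := ⟨fun p h => h.1 rfl⟩

/-- One-directional adjacency for the column graphs: vertical steps everywhere,
horizontal steps at heights divisible by `t`. -/
def colStep (t : ℕ) (p q : ℕ × ℕ) : Prop :=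
  (p.1 = q.1 ∧ q.2 = p.2 + 1) ∨ (p.2 = q.2 ∧ t ∣ p.2 ∧ q.1 = p.1 + 1)

/-- Vertices of `X_n`. -/
def XVert (f : ℕ → ℕ) (n : ℕ) : Type :=
  {p : ℕ × ℕ // p.1 < f n ∧ p.2 ≤ 2 ^ 2 ^ (2 * n) * f n}

/-- The graph `X_n`. -/
def Xgraph (f : ℕ → ℕ) (n : ℕ) : SimpleGraph (XVert f n) where
  Adj u v := u ≠ v ∧ (colStep (2 ^ 2 ^ (2 * n)) u.val v.val ∨ colStep (2 ^ 2 ^ (2 * n)) v.val u.val)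
  symm := ⟨fun u v h => ⟨h.1.symm, h.2.symm⟩⟩
  loopless := ⟨fun u h => h.1 rfl⟩

/-- Vertices of `Y_n`. -/
def YVert (f : ℕ → ℕ) (n : ℕ) : Type :=
  {p : ℕ × ℕ // p.1 < f n ∧ p.2 ≤ 2 ^ 2 ^ (2 * n + 1) * f n}

/-- The graph `Y_n`. -/
def Ygraph (f : ℕ → ℕ) (n : ℕ) : SimpleGraph (YVert f n) where
  Adj u v := u ≠ v ∧
    (colStep (2 ^ 2 ^ (2 * n + 1)) u.val v.val ∨ colStep (2 ^ 2 ^ (2 * n + 1)) v.val u.val)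
  symm := ⟨fun u v h => ⟨h.1.symm, h.2.symm⟩⟩
  loopless := ⟨fun u h => h.1 rfl⟩

/-- Vertices of `X = ⨆ (n ≥ 1) X_n`: triples `(n, i, j)` with `(i,j)` a vertex of `X_n`. -/
def XTVert (f : ℕ → ℕ) : Type :=
  {p : ℕ × ℕ × ℕ // 1 ≤ p.1 ∧ p.2.1 < f p.1 ∧ p.2.2 ≤ 2 ^ 2 ^ (2 * p.1) * f p.1}

/-- The graph `X`, the disjoint union of the `X_n` for `n ≥ 1`. -/
def Xtotal (f : ℕ → ℕ) : SimpleGraph (XTVert f) where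
  Adj u v := u ≠ v ∧ u.val.1 = v.val.1 ∧
    (colStep (2 ^ 2 ^ (2 * u.val.1)) u.val.2 v.val.2 ∨
     colStep (2 ^ 2 ^ (2 * u.val.1)) v.val.2 u.val.2)
  symm := ⟨fun u v h => ⟨h.1.symm, h.2.1.symm, by rw [← h.2.1]; exact h.2.2.symm⟩⟩
  loopless := ⟨fun u h => h.1 rfl⟩

/-- Vertices of `Y = ⨆ (n ≥ 1) Y_n`. -/
def YTVert (f : ℕ → ℕ) : Type :=
  {p : ℕ × ℕ × ℕ // 1 ≤ p.1 ∧ p.2.1 < f p.1 ∧ p.2.2 ≤ 2 ^ 2 ^ (2 * p.1 + 1) * f p.1}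

/-- The graph `Y`, the disjoint union of the `Y_n` for `n ≥ 1`. -/
def Ytotal (f : ℕ → ℕ) : SimpleGraph (YTVert f) where
  Adj u v := u ≠ v ∧ u.val.1 = v.val.1 ∧
    (colStep (2 ^ 2 ^ (2 * u.val.1 + 1)) u.val.2 v.val.2 ∨
     colStep (2 ^ 2 ^ (2 * u.val.1 + 1)) v.val.2 u.val.2)
  symm := ⟨fun u v h => ⟨h.1.symm, h.2.1.symm, by rw [← h.2.1]; exact h.2.2.symm⟩⟩
  loopless := ⟨fun u h => h.1 rfl⟩


private lemma list_count_bounds (l : List ℤ) (h : ∀ x ∈ l, x = 1 ∨ x = -1 ∨ x = 0) :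
    l.sum ≤ l.count 1 ∧ -(l.count (-1) : ℤ) ≤ l.sum := by
  induction l with
  | nil => simp
  | cons a t ih =>
    obtain ⟨h1, h2⟩ := ih (fun x hx => h x (List.mem_cons_of_mem _ hx))
    have ha := h a (List.mem_cons_self)
    simp only [List.sum_cons, List.count_cons]
    rcases ha with rfl | rfl | rfl <;> simp <;> push_cast <;> omega

private lemma walk_sum_diff {V : Type*} {G : SimpleGraph V} (g : V → ℤ)
    (F : G.Dart → ℤ) (hFg : ∀ d, F d = g d.snd - g d.fst) {u v : V} (p : G.Walk u v) :
    (p.darts.map F).sum = g v - g u := by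
  induction p with
  | nil => simp
  | cons h q ih =>
    rw [Walk.darts_cons, List.map_cons, List.sum_cons, ih, hFg]
    simp

private lemma mem_tail_of_mem_support {V : Type*} {G : SimpleGraph V} {s x : V}
    {p : G.Walk s s} (hp : 0 < p.length) (hx : x ∈ p.support) : x ∈ p.support.tail := by
  cases p with
  | nil => simp at hp
  | cons h q =>
    rw [Walk.support_cons] at hx
    simp only [Walk.support_cons, List.tail_cons]
    rcases List.mem_cons.mp hx with rfl | hx
    · exact q.end_mem_support
    · exact hx

private lemma mem_support_rotate_iff {V : Type*} [DecidableEq V] {G : SimpleGraph V} {s a x : V}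
    {c : G.Walk s s} (hp : 0 < c.length) (ha : a ∈ c.support) :
    x ∈ (c.rotate a ha).support ↔ x ∈ c.support := by
  have hlen : (c.rotate a ha).length = c.length := by
    have h1 := congr_arg Walk.length (c.take_spec ha)
    rw [Walk.length_append] at h1
    simp only [Walk.rotate, Walk.length_append]
    omega
  have hperm := (Walk.support_rotate c a ha).perm
  constructor
  · intro hx
    exact List.mem_of_mem_tail (hperm.mem_iff.mp (mem_tail_of_mem_support (by omega) hx))
  · intro hx
    exact List.mem_of_mem_tail (hperm.mem_iff.mpr (mem_tail_of_mem_support hp hx))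

private lemma count_up_down {V : Type*} [DecidableEq V] {G : SimpleGraph V} (g : V → ℤ)
    (F : G.Dart → ℤ) (hFg : ∀ d, F d = g d.snd - g d.fst)
    {r a b : V} (c : G.Walk r r) (hr : 0 < c.length)
    (hval : ∀ d ∈ c.darts, F d = 1 ∨ F d = -1 ∨ F d = 0)
    (ha : a ∈ c.support) (hb : b ∈ c.support) :
    g b - g a ≤ ((c.darts.map F).count 1 : ℤ) ∧
    g b - g a ≤ ((c.darts.map F).count (-1) : ℤ) := by
  have hb1 : b ∈ (c.rotate a ha).support := (mem_support_rotate_iff hr ha).mpr hb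
  have hdperm : (c.rotate a ha).darts.Perm c.darts := (Walk.rotate_darts c a ha).perm
  have hcount : ∀ z : ℤ, ((c.rotate a ha).darts.map F).count z = (c.darts.map F).count z :=
    fun z => (hdperm.map F).count_eq z
  have hdarts : (c.rotate a ha).darts
      = ((c.rotate a ha).takeUntil b hb1).darts ++ ((c.rotate a ha).dropUntil b hb1).darts := by
    rw [← Walk.darts_append, Walk.take_spec]
  have hmemP : ∀ d ∈ ((c.rotate a ha).takeUntil b hb1).darts, d ∈ c.darts := fun d hd =>
    hdperm.mem_iff.mp (hdarts ▸ List.mem_append_left _ hd)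
  have hmemQ : ∀ d ∈ ((c.rotate a ha).dropUntil b hb1).darts, d ∈ c.darts := fun d hd =>
    hdperm.mem_iff.mp (hdarts ▸ List.mem_append_right _ hd)
  have hsumP := walk_sum_diff g F hFg ((c.rotate a ha).takeUntil b hb1)
  have hsumQ := walk_sum_diff g F hFg ((c.rotate a ha).dropUntil b hb1)
  have hvalP : ∀ x ∈ ((c.rotate a ha).takeUntil b hb1).darts.map F, x = 1 ∨ x = -1 ∨ x = 0 := by
    intro x hx
    obtain ⟨d, hd, rfl⟩ := List.mem_map.mp hx
    exact hval d (hmemP d hd)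
  have hvalQ : ∀ x ∈ ((c.rotate a ha).dropUntil b hb1).darts.map F, x = 1 ∨ x = -1 ∨ x = 0 := by
    intro x hx
    obtain ⟨d, hd, rfl⟩ := List.mem_map.mp hx
    exact hval d (hmemQ d hd)
  have hP := (list_count_bounds _ hvalP).1
  have hQ := (list_count_bounds _ hvalQ).2
  have e1 := hcount 1
  have e2 := hcount (-1)
  rw [hdarts, List.map_append, List.count_append] at e1 e2
  rw [hsumP] at hP
  rw [hsumQ] at hQ
  omega

private lemma walk_coord_const {V : Type*} {G : SimpleGraph V} (g : V → ℕ) {u v : V}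
    (p : G.Walk u v) (h : ∀ d ∈ p.darts, g d.snd = g d.fst) :
    ∀ x ∈ p.support, g x = g u := by
  induction p with
  | nil => intro x hx; rw [Walk.support_nil] at hx; simp at hx; rw [hx]
  | @cons u' w' v' hadj q ih =>
    intro x hx
    rw [Walk.support_cons] at hx
    have hd : g w' = g u' := h ⟨(u', w'), hadj⟩ (by rw [Walk.darts_cons]; exact List.mem_cons_self)
    rcases List.mem_cons.mp hx with rfl | hx
    · rfl
    · rw [ih (fun d hd' => h d (by rw [Walk.darts_cons]; exact List.mem_cons_of_mem _ hd')) x hx]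
      exact hd

private lemma nodup_le_card (l : List ℕ) (hl : l.Nodup) (lo hi : ℕ)
    (h : ∀ x ∈ l, lo ≤ x ∧ x ≤ hi) : l.length ≤ hi + 1 - lo := by
  classical
  have hsub : l.toFinset ⊆ Finset.Icc lo hi := by
    intro x hx
    rw [Finset.mem_Icc]
    exact h x (List.mem_toFinset.mp hx)
  have hcard := Finset.card_le_card hsub
  rwa [List.toFinset_card_of_nodup hl, Nat.card_Icc] at hcard

open Walk in
private lemma y_adj_cases {f : ℕ → ℕ} {m : ℕ} {u v : YVert f m}
    (h : (Ygraph f m).Adj u v) :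
    (u.val.1 = v.val.1 ∧ v.val.2 = u.val.2 + 1) ∨
    (u.val.1 = v.val.1 ∧ u.val.2 = v.val.2 + 1) ∨
    (u.val.2 = v.val.2 ∧ 2 ^ 2 ^ (2 * m + 1) ∣ u.val.2 ∧ v.val.1 = u.val.1 + 1) ∨
    (u.val.2 = v.val.2 ∧ 2 ^ 2 ^ (2 * m + 1) ∣ u.val.2 ∧ u.val.1 = v.val.1 + 1) := by
  have h' : u ≠ v ∧ (colStep (2 ^ 2 ^ (2 * m + 1)) u.val v.val ∨
      colStep (2 ^ 2 ^ (2 * m + 1)) v.val u.val) := h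
  obtain ⟨-, h1 | h1⟩ := h' <;> rcases h1 with ⟨h1, h2⟩ | ⟨h1, h2, h3⟩
  · exact Or.inl ⟨h1, h2⟩
  · exact Or.inr (Or.inr (Or.inl ⟨h1, h2, h3⟩))
  · exact Or.inr (Or.inl ⟨h1.symm, h2⟩)
  · exact Or.inr (Or.inr (Or.inr ⟨h1.symm, h1 ▸ h2, h3⟩))

private lemma darts_length_count {f : ℕ → ℕ} {m : ℕ} (ds : List ((Ygraph f m).Dart)) :
    ds.length =
      (ds.map (fun d => ((d.snd.val.2 : ℤ) - (d.fst.val.2 : ℤ)))).count 1 +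
      (ds.map (fun d => ((d.snd.val.2 : ℤ) - (d.fst.val.2 : ℤ)))).count (-1) +
      (ds.map (fun d => ((d.snd.val.1 : ℤ) - (d.fst.val.1 : ℤ)))).count 1 +
      (ds.map (fun d => ((d.snd.val.1 : ℤ) - (d.fst.val.1 : ℤ)))).count (-1) := by
  induction ds with
  | nil => simp
  | cons d t ih =>
    simp only [List.map_cons, List.count_cons, List.length_cons]
    rcases y_adj_cases d.adj with ⟨h1, h2⟩ | ⟨h1, h2⟩ | ⟨h1, -, h3⟩ | ⟨h1, -, h3⟩
    · have hF : ((d.snd.val.2 : ℤ) - (d.fst.val.2 : ℤ)) = 1 := by omega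
      have hC : ((d.snd.val.1 : ℤ) - (d.fst.val.1 : ℤ)) = 0 := by omega
      rw [hF, hC]; simp; omega
    · have hF : ((d.snd.val.2 : ℤ) - (d.fst.val.2 : ℤ)) = -1 := by omega
      have hC : ((d.snd.val.1 : ℤ) - (d.fst.val.1 : ℤ)) = 0 := by omega
      rw [hF, hC]; simp; omega
    · have hF : ((d.snd.val.2 : ℤ) - (d.fst.val.2 : ℤ)) = 0 := by omega
      have hC : ((d.snd.val.1 : ℤ) - (d.fst.val.1 : ℤ)) = 1 := by omega
      rw [hF, hC]; simp; omega
    · have hF : ((d.snd.val.2 : ℤ) - (d.fst.val.2 : ℤ)) = 0 := by omega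
      have hC : ((d.snd.val.1 : ℤ) - (d.fst.val.1 : ℤ)) = -1 := by omega
      rw [hF, hC]; simp; omega

private lemma dvd_of_max {f : ℕ → ℕ} {m : ℕ} {b : YVert f m}
    {c : (Ygraph f m).Walk b b} (hc : c.IsCycle)
    (hmax : ∀ x ∈ c.support, x.val.2 ≤ b.val.2) :
    2 ^ 2 ^ (2 * m + 1) ∣ b.val.2 := by
  by_contra hT
  have h3 := hc.three_le_length
  have hnn : ¬ c.Nil := by rw [Walk.not_nil_iff_lt_length]; omega
  obtain ⟨x, h1, q1, hq1⟩ := Walk.not_nil_iff.mp hnn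
  have hnr : ¬ c.reverse.Nil := by rw [Walk.not_nil_iff_lt_length, Walk.length_reverse]; omega
  obtain ⟨y, h2, q2, hq2⟩ := Walk.not_nil_iff.mp hnr
  have hxs : x ∈ c.support := by rw [hq1, Walk.support_cons]; exact List.mem_cons_of_mem _ q1.start_mem_support
  have hys : y ∈ c.support := by
    have hy : y ∈ c.reverse.support := by
      rw [hq2, Walk.support_cons]; exact List.mem_cons_of_mem _ q2.start_mem_support
    rwa [Walk.support_reverse, List.mem_reverse] at hy
  have hbx := hmax x hxs
  have hby := hmax y hys
  have hx' : b.val.1 = x.val.1 ∧ b.val.2 = x.val.2 + 1 := by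
    rcases y_adj_cases h1 with ⟨e1, e2⟩ | ⟨e1, e2⟩ | ⟨-, e2, -⟩ | ⟨-, e2, -⟩
    · omega
    · exact ⟨e1, e2⟩
    · exact absurd e2 hT
    · exact absurd e2 hT
  have hy' : b.val.1 = y.val.1 ∧ b.val.2 = y.val.2 + 1 := by
    rcases y_adj_cases h2 with ⟨e1, e2⟩ | ⟨e1, e2⟩ | ⟨-, e2, -⟩ | ⟨-, e2, -⟩
    · omega
    · exact ⟨e1, e2⟩
    · exact absurd e2 hT
    · exact absurd e2 hT
  have hxy : x = y := Subtype.ext (Prod.ext_iff.mpr ⟨by omega, by omega⟩)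
  subst hxy
  have hedge : c.edges = s(b, x) :: q1.edges := by rw [hq1, Walk.edges_cons]
  have hrev : c.edges.reverse = s(b, x) :: q2.edges := by
    rw [← Walk.edges_reverse, hq2, Walk.edges_cons]
  have hq2ne : q2.edges ≠ [] := by
    have hlq2 : q2.length + 1 = c.length := by
      have hh := congr_arg Walk.length hq2
      rw [Walk.length_reverse, Walk.length_cons] at hh
      omega
    intro hnil
    have := congr_arg List.length hnil
    rw [Walk.length_edges] at this
    simp only [List.length_nil] at this
    omega
  have hnodup : c.edges.Nodup := hc.isCircuit.isTrail.edges_nodup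
  have h5 : c.edges = q2.edges.reverse ++ [s(b, x)] := by
    have hh := congr_arg List.reverse hrev
    rwa [List.reverse_reverse, List.reverse_cons] at hh
  rw [hedge] at h5 hnodup
  obtain ⟨e0, t0, ht0⟩ := List.exists_cons_of_ne_nil
      (show q2.edges.reverse ≠ [] by simpa using hq2ne)
  rw [ht0, List.cons_append] at h5
  have h6 : q1.edges = t0 ++ [s(b, x)] := by
    injection h5 with h5a h5b
  rw [List.nodup_cons] at hnodup
  exact hnodup.1 (by rw [h6]; simp)

private lemma dvd_of_min {f : ℕ → ℕ} {m : ℕ} {b : YVert f m}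
    {c : (Ygraph f m).Walk b b} (hc : c.IsCycle)
    (hmin : ∀ x ∈ c.support, b.val.2 ≤ x.val.2) :
    2 ^ 2 ^ (2 * m + 1) ∣ b.val.2 := by
  by_contra hT
  have h3 := hc.three_le_length
  have hnn : ¬ c.Nil := by rw [Walk.not_nil_iff_lt_length]; omega
  obtain ⟨x, h1, q1, hq1⟩ := Walk.not_nil_iff.mp hnn
  have hnr : ¬ c.reverse.Nil := by rw [Walk.not_nil_iff_lt_length, Walk.length_reverse]; omega
  obtain ⟨y, h2, q2, hq2⟩ := Walk.not_nil_iff.mp hnr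
  have hxs : x ∈ c.support := by rw [hq1, Walk.support_cons]; exact List.mem_cons_of_mem _ q1.start_mem_support
  have hys : y ∈ c.support := by
    have hy : y ∈ c.reverse.support := by
      rw [hq2, Walk.support_cons]; exact List.mem_cons_of_mem _ q2.start_mem_support
    rwa [Walk.support_reverse, List.mem_reverse] at hy
  have hbx := hmin x hxs
  have hby := hmin y hys
  have hx' : b.val.1 = x.val.1 ∧ x.val.2 = b.val.2 + 1 := by
    rcases y_adj_cases h1 with ⟨e1, e2⟩ | ⟨e1, e2⟩ | ⟨-, e2, -⟩ | ⟨-, e2, -⟩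
    · exact ⟨e1, e2⟩
    · omega
    · exact absurd e2 hT
    · exact absurd e2 hT
  have hy' : b.val.1 = y.val.1 ∧ y.val.2 = b.val.2 + 1 := by
    rcases y_adj_cases h2 with ⟨e1, e2⟩ | ⟨e1, e2⟩ | ⟨-, e2, -⟩ | ⟨-, e2, -⟩
    · exact ⟨e1, e2⟩
    · omega
    · exact absurd e2 hT
    · exact absurd e2 hT
  have hxy : x = y := Subtype.ext (Prod.ext_iff.mpr ⟨by omega, by omega⟩)
  subst hxy
  have hedge : c.edges = s(b, x) :: q1.edges := by rw [hq1, Walk.edges_cons]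
  have hrev : c.edges.reverse = s(b, x) :: q2.edges := by
    rw [← Walk.edges_reverse, hq2, Walk.edges_cons]
  have hq2ne : q2.edges ≠ [] := by
    have hlq2 : q2.length + 1 = c.length := by
      have hh := congr_arg Walk.length hq2
      rw [Walk.length_reverse, Walk.length_cons] at hh
      omega
    intro hnil
    have := congr_arg List.length hnil
    rw [Walk.length_edges] at this
    simp only [List.length_nil] at this
    omega
  have hnodup : c.edges.Nodup := hc.isCircuit.isTrail.edges_nodup
  have h5 : c.edges = q2.edges.reverse ++ [s(b, x)] := by
    have hh := congr_arg List.reverse hrev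
    rwa [List.reverse_reverse, List.reverse_cons] at hh
  rw [hedge] at h5 hnodup
  obtain ⟨e0, t0, ht0⟩ := List.exists_cons_of_ne_nil
      (show q2.edges.reverse ≠ [] by simpa using hq2ne)
  rw [ht0, List.cons_append] at h5
  have h6 : q1.edges = t0 ++ [s(b, x)] := by
    injection h5 with h5a h5b
  rw [List.nodup_cons] at hnodup
  exact hnodup.1 (by rw [h6]; simp)

/-- For `m ≥ 1`, every cycle in `Y_m` has at least
`2 · 2^(2^(2m+1)) + 2` vertices (a cycle of length `L` visits exactly `L` vertices). -/
theorem statement8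
    (f : ℕ → ℕ)
    (hsurj : ∀ k, 1 ≤ k → ∃ n, 1 ≤ n ∧ f n = k)
    (hf1 : f 1 = 1)
    (hf : ∀ n, 2 ≤ n → 2 ≤ f n ∧ f n ≤ n)
    (hinf : ∀ k, 2 ≤ k → {n | f n = k}.Infinite)
    (m : ℕ) (hm : 1 ≤ m)
    (v : YVert f m) (c : (Ygraph f m).Walk v v) (hc : c.IsCycle) :
    2 * 2 ^ 2 ^ (2 * m + 1) + 2 ≤ c.length := by
  classical
  have h3 := hc.three_le_length
  have hpos : 0 < c.length := by omega
  -- dart value facts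
  have hvalh : ∀ d ∈ c.darts,
      ((d.snd.val.2 : ℤ) - (d.fst.val.2 : ℤ)) = 1 ∨
      ((d.snd.val.2 : ℤ) - (d.fst.val.2 : ℤ)) = -1 ∨
      ((d.snd.val.2 : ℤ) - (d.fst.val.2 : ℤ)) = 0 := by
    intro d _
    rcases y_adj_cases d.adj with ⟨-, e⟩ | ⟨-, e⟩ | ⟨e, -, -⟩ | ⟨e, -, -⟩ <;> omega
  have hvalc : ∀ d ∈ c.darts,
      ((d.snd.val.1 : ℤ) - (d.fst.val.1 : ℤ)) = 1 ∨
      ((d.snd.val.1 : ℤ) - (d.fst.val.1 : ℤ)) = -1 ∨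
      ((d.snd.val.1 : ℤ) - (d.fst.val.1 : ℤ)) = 0 := by
    intro d _
    rcases y_adj_cases d.adj with ⟨e, -⟩ | ⟨e, -⟩ | ⟨-, -, e⟩ | ⟨-, -, e⟩ <;> omega
  have hne := c.support_ne_nil
  -- extremes of height
  obtain ⟨b, hb⟩ : ∃ b, b ∈ List.argmax (fun x : YVert f m => x.val.2) c.support := by
    rcases hx : List.argmax (fun x : YVert f m => x.val.2) c.support with - | b
    · rw [List.argmax_eq_none] at hx; exact absurd hx hne
    · exact ⟨b, rfl⟩
  have hbS : b ∈ c.support := List.argmax_mem hb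
  have hbmax : ∀ x ∈ c.support, x.val.2 ≤ b.val.2 := fun x hx => List.le_of_mem_argmax (f := fun x : YVert f m => x.val.2) hx hb
  obtain ⟨a, ha⟩ : ∃ a, a ∈ List.argmin (fun x : YVert f m => x.val.2) c.support := by
    rcases hx : List.argmin (fun x : YVert f m => x.val.2) c.support with - | a
    · rw [List.argmin_eq_none] at hx; exact absurd hx hne
    · exact ⟨a, rfl⟩
  have haS : a ∈ c.support := List.argmin_mem ha
  have hamin : ∀ x ∈ c.support, a.val.2 ≤ x.val.2 := fun x hx => List.le_of_mem_argmin (f := fun x : YVert f m => x.val.2) hx ha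
  -- extremes of column
  obtain ⟨b', hb'⟩ : ∃ b', b' ∈ List.argmax (fun x : YVert f m => x.val.1) c.support := by
    rcases hx : List.argmax (fun x : YVert f m => x.val.1) c.support with - | b'
    · rw [List.argmax_eq_none] at hx; exact absurd hx hne
    · exact ⟨b', rfl⟩
  have hb'S : b' ∈ c.support := List.argmax_mem hb'
  have hb'max : ∀ x ∈ c.support, x.val.1 ≤ b'.val.1 := fun x hx => List.le_of_mem_argmax (f := fun x : YVert f m => x.val.1) hx hb'
  obtain ⟨a', ha'⟩ : ∃ a', a' ∈ List.argmin (fun x : YVert f m => x.val.1) c.support := by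
    rcases hx : List.argmin (fun x : YVert f m => x.val.1) c.support with - | a'
    · rw [List.argmin_eq_none] at hx; exact absurd hx hne
    · exact ⟨a', rfl⟩
  have ha'S : a' ∈ c.support := List.argmin_mem ha'
  have ha'min : ∀ x ∈ c.support, a'.val.1 ≤ x.val.1 := fun x hx => List.le_of_mem_argmin (f := fun x : YVert f m => x.val.1) hx ha'
  -- counts
  have hlen := darts_length_count c.darts
  rw [Walk.length_darts] at hlen
  have Hh := count_up_down (fun x : YVert f m => (x.val.2 : ℤ))
      (fun d => ((d.snd.val.2 : ℤ) - (d.fst.val.2 : ℤ))) (fun d => rfl) c hpos hvalh haS hbS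
  have Hc := count_up_down (fun x : YVert f m => (x.val.1 : ℤ))
      (fun d => ((d.snd.val.1 : ℤ) - (d.fst.val.1 : ℤ))) (fun d => rfl) c hpos hvalc ha'S hb'S
  obtain ⟨hU, hD⟩ := Hh
  obtain ⟨hR, hL⟩ := Hc
  have hsupplen : c.support.tail.length = c.length := by
    rw [List.length_tail, Walk.length_support]; omega
  have htail := hc.support_nodup
  by_cases hhor : ∃ d ∈ c.darts, d.snd.val.1 ≠ d.fst.val.1
  · -- there is a horizontal dart
    obtain ⟨d0, hd0, hd0ne⟩ := hhor
    have hfstS := Walk.dart_fst_mem_support_of_mem_darts c hd0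
    have hsndS := Walk.dart_snd_mem_support_of_mem_darts c hd0
    have hE : a'.val.1 < b'.val.1 := by
      have h1 := ha'min _ hfstS
      have h2 := ha'min _ hsndS
      have h4 := hb'max _ hfstS
      have h5 := hb'max _ hsndS
      omega
    -- heights are not all equal
    have hD1 : a.val.2 < b.val.2 := by
      by_contra hEq
      have hall : ∀ x ∈ c.support, x.val.2 = b.val.2 := fun x hx =>
        le_antisymm (hbmax x hx) (by have := hamin x hx; have := hamin b hbS; omega)
      have hnodupcols : (c.support.tail.map (fun x : YVert f m => x.val.1)).Nodup := by
        refine htail.map_on ?_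
        intro x hx y hy hxy
        exact Subtype.ext (Prod.ext_iff.mpr ⟨hxy, by
          rw [hall x (List.mem_of_mem_tail hx), hall y (List.mem_of_mem_tail hy)]⟩)
      have hlb := nodup_le_card _ hnodupcols a'.val.1 b'.val.1 ?_
      · rw [List.length_map, hsupplen] at hlb
        omega
      · intro z hz
        obtain ⟨x, hx, rfl⟩ := List.mem_map.mp hz
        exact ⟨ha'min x (List.mem_of_mem_tail hx), hb'max x (List.mem_of_mem_tail hx)⟩
    -- divisibility at the extremes
    have hdvdb : 2 ^ 2 ^ (2 * m + 1) ∣ b.val.2 :=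
      dvd_of_max (hc.rotate hbS)
        (fun x hx => hbmax x ((mem_support_rotate_iff hpos hbS).mp hx))
    have hdvda : 2 ^ 2 ^ (2 * m + 1) ∣ a.val.2 :=
      dvd_of_min (hc.rotate haS)
        (fun x hx => hamin x ((mem_support_rotate_iff hpos haS).mp hx))
    have hTD : 2 ^ 2 ^ (2 * m + 1) ∣ (b.val.2 - a.val.2) := Nat.dvd_sub hdvdb hdvda
    have hDT : 2 ^ 2 ^ (2 * m + 1) ≤ b.val.2 - a.val.2 := Nat.le_of_dvd (by omega) hTD
    omega
  · -- all darts are vertical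
    push_neg at hhor
    have hconst := walk_coord_const (fun x : YVert f m => x.val.1) c hhor
    have hnoduph : (c.support.tail.map (fun x : YVert f m => x.val.2)).Nodup := by
      refine htail.map_on ?_
      intro x hx y hy hxy
      exact Subtype.ext (Prod.ext_iff.mpr ⟨by
        rw [hconst x (List.mem_of_mem_tail hx), hconst y (List.mem_of_mem_tail hy)], hxy⟩)
    have hlb := nodup_le_card _ hnoduph a.val.2 b.val.2 ?_
    · rw [List.length_map, hsupplen] at hlb
      have hab := hamin b hbS
      omega
    · intro z hz
      obtain ⟨x, hx, rfl⟩ := List.mem_map.mp hz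
      exact ⟨hamin x (List.mem_of_mem_tail hx), hbmax x (List.mem_of_mem_tail hx)⟩
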